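/- Let $A \in \mathbb{R}^{k \times k}$ be Hurwitz and let $W \in \mathbb{R}^{k \times k}$ be skew-symmetric, i.e., $W^{\top} = -W$. If $Z \in \mathbb{R}^{k \times k}$ satisfies $A Z + Z A^{\top} + W = 0$, then $Z$ is skew-symmetric: $Z = -Z^{\top}$. -/
import Mathlib


open Matrix Polynomial

variable {n : Type*} [Fintype n] [DecidableEq n] {F : Type*} [Field F]

lemma aux_eval_charpoly (M : Matrix n n F) (μ : F) :
    M.charpoly.eval μ = (Matrix.scalar n μ - M).det := by
  rw [Matrix.charpoly, ← Polynomial.coe_evalRingHom, RingHom.map_det]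
  congr 1
  ext i j
  by_cases h : i = j
  · subst h; simp [charmatrix_apply_eq]
  · simp [charmatrix_apply_ne _ _ _ h, Matrix.scalar_apply, Matrix.diagonal_apply_ne _ h]

lemma aux_mem_spectrum_iff (M : Matrix n n F) (μ : F) :
    μ ∈ spectrum F M ↔ (Matrix.scalar n μ - M).det = 0 := by
  rw [spectrum.mem_iff, Matrix.isUnit_iff_isUnit_det, isUnit_iff_ne_zero, not_ne_iff,
    Matrix.algebraMap_eq_diagonal, Matrix.scalar_apply]
  simp [Pi.algebraMap_def]

lemma aux_intertwine {R : Type*} [CommRing R] (A B Y : Matrix n n R)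
    (h : A * Y = Y * B) (p : R[X]) : (aeval A p) * Y = Y * (aeval B p) := by
  have hpow : ∀ m : ℕ, A ^ m * Y = Y * B ^ m := by
    intro m
    induction m with
    | zero => simp
    | succ m ih => rw [pow_succ, pow_succ, mul_assoc, h, ← mul_assoc, ih, mul_assoc]
  induction p using Polynomial.induction_on' with
  | add p q hp hq => simp [map_add, add_mul, mul_add, hp, hq]
  | monomial m c =>
      simp only [aeval_monomial]
      rw [mul_assoc, hpow m, ← mul_assoc, Algebra.commutes c Y, mul_assoc]

/-- If `A` is Hurwitz and `W` is skew-symmetric, then any solution `Z` of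
`A * Z + Z * Aᵀ + W = 0` is skew-symmetric: `Z = -Zᵀ`. -/
theorem hurwitz_lyapunov_skew_solution
    (k : ℕ) (A : Matrix (Fin k) (Fin k) ℝ)
    (hA : ∀ μ ∈ spectrum ℂ (A.map (algebraMap ℝ ℂ)), μ.re < 0)
    (W : Matrix (Fin k) (Fin k) ℝ) (hW : Wᵀ = -W)
    (Z : Matrix (Fin k) (Fin k) ℝ)
    (hZ : A * Z + Z * Aᵀ + W = 0) :
    Z = -Zᵀ := by
  rcases Nat.eq_zero_or_pos k with hk | hk
  · subst hk; ext i j; exact i.elim0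
  haveI : Nonempty (Fin k) := ⟨⟨0, hk⟩⟩
  set Y : Matrix (Fin k) (Fin k) ℝ := Z + Zᵀ with hY
  have hZt : A * Zᵀ + Zᵀ * Aᵀ + (-W) = 0 := by
    have := congrArg Matrix.transpose hZ
    simpa [Matrix.transpose_add, Matrix.transpose_mul, hW, add_comm, add_left_comm] using this
  have hAY : A * Y = Y * (-Aᵀ) := by
    have hsum : A * Y + Y * Aᵀ = 0 := by
      have h2 : A * Y + Y * Aᵀ = (A * Z + Z * Aᵀ + W) + (A * Zᵀ + Zᵀ * Aᵀ + -W) := by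
        simp only [hY, mul_add, add_mul]; abel
      rw [h2, hZ, hZt, add_zero]
    rw [mul_neg, eq_neg_iff_add_eq_zero]
    exact hsum
  have key : Y * (aeval (-Aᵀ) A.charpoly) = 0 := by
    rw [← aux_intertwine A (-Aᵀ) Y hAY, Matrix.aeval_self_charpoly, zero_mul]
  set C : Matrix (Fin k) (Fin k) ℝ := aeval (-Aᵀ) A.charpoly with hC
  set A' : Matrix (Fin k) (Fin k) ℂ := A.map (algebraMap ℝ ℂ) with hA'
  have hdetC : IsUnit C.det := by
    rw [isUnit_iff_ne_zero]
    intro h0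
    have hdet0 : (C.map (algebraMap ℝ ℂ)).det = 0 := by
      rw [← RingHom.mapMatrix_apply, ← RingHom.map_det, h0, map_zero]
    have hCmap : C.map (algebraMap ℝ ℂ) = aeval (-A'ᵀ) A'.charpoly := by
      rw [hA', Matrix.charpoly_map, Polynomial.aeval_map_algebraMap]
      have h1 : (-A'ᵀ) = (Algebra.ofId ℝ ℂ).mapMatrix (-Aᵀ) := by
        ext i j
        simp [hA', Matrix.map_apply, Algebra.ofId_apply]
      rw [h1, Polynomial.aeval_algHom_apply]
      rfl
    rw [hCmap] at hdet0
    have hdegpos : 0 < A'.charpoly.degree := by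
      rw [Polynomial.degree_eq_natDegree ((Matrix.charpoly_monic A').ne_zero), Matrix.charpoly_natDegree_eq_dim]
      exact_mod_cast (by simpa using hk)
    have h0mem : (0 : ℂ) ∈ spectrum ℂ (aeval (-A'ᵀ) A'.charpoly) := by
      rw [spectrum.zero_mem_iff]
      rw [Matrix.isUnit_iff_isUnit_det, isUnit_iff_ne_zero, not_ne_iff]
      exact hdet0
    rw [spectrum.map_polynomial_aeval_of_degree_pos (-A'ᵀ) A'.charpoly hdegpos] at h0mem
    obtain ⟨μ, hμmem, hμ0⟩ := h0mem
    -- μ is a root of charpoly A', so μ ∈ spectrum A'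
    have hμspec : μ ∈ spectrum ℂ A' := by
      rw [aux_mem_spectrum_iff]
      rw [← aux_eval_charpoly]
      exact hμ0
    have hre : μ.re < 0 := hA μ hμspec
    -- μ ∈ spectrum of -A'ᵀ gives -μ ∈ spectrum A'
    have hneg : -μ ∈ spectrum ℂ A' := by
      rw [aux_mem_spectrum_iff] at hμmem ⊢
      have h3 : Matrix.scalar (Fin k) μ - (-A'ᵀ) = (-(Matrix.scalar (Fin k) (-μ) - A'))ᵀ := by
        ext i j
        by_cases h : i = j
        · simp [Matrix.scalar_apply, Matrix.diagonal_apply, h, Matrix.transpose_apply]; ring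
        · simp [Matrix.scalar_apply, Matrix.diagonal_apply, h, Ne.symm h,
            Matrix.transpose_apply]
      rw [h3, Matrix.det_transpose, Matrix.det_neg, mul_eq_zero] at hμmem
      rcases hμmem with h | h
      · exact absurd h (pow_ne_zero _ (by norm_num))
      · exact h
    have := hA _ hneg
    simp only [Complex.neg_re] at this
    linarith
  have hY0 : Y = 0 := by
    calc Y = Y * (C * C⁻¹) := by rw [Matrix.mul_nonsing_inv C hdetC, mul_one]
      _ = (Y * C) * C⁻¹ := by rw [mul_assoc]
      _ = 0 := by rw [key, zero_mul]
  have h4 : Z + Zᵀ = 0 := hY ▸ hY0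
  exact eq_neg_of_add_eq_zero_left h4
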